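/- arXiv:2511.02972 — 3 statements merged into one kernel-verified Lean document; each statement's English description precedes it below -/
import Mathlib

section
/- Let h : ℝ≥0 → ℝ≥0 be a monotonically increasing function and let δ > 0. Then the inequality (d/dr) h(r) ≤ h(r)^{1+δ} holds for all r ∈ ℝ≥0 outside a Borel subset E of finite Lebesgue measure (at points where the derivative exists, which is almost everywhere by monotonicity). -/
open MeasureTheory

open Set Filter

lemma aux_mono_deriv_finite (g : ℝ → ℝ) (hg : Monotone g) (m M : ℝ)
    (hbd : ∀ x, m ≤ g x ∧ g x ≤ M) (c : ℝ) (hc : 0 < c) :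
    volume {x : ℝ | DifferentiableAt ℝ g x ∧ c < deriv g x} < ⊤ := by
  set μ := hg.stieltjesFunction.measure with hμ
  have hF : ∀ x : ℝ, m ≤ hg.stieltjesFunction x ∧ hg.stieltjesFunction x ≤ M := by
    intro x
    constructor
    · have h1 : g x ≤ hg.stieltjesFunction x := by
        rw [hg.stieltjesFunction_eq]; exact hg.le_rightLim le_rfl
      exact le_trans (hbd x).1 h1
    · have h1 : hg.stieltjesFunction x ≤ g (x + 1) := by
        rw [hg.stieltjesFunction_eq]; exact hg.rightLim_le (by linarith)
      exact le_trans h1 (hbd (x + 1)).2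
  have hunion : (⋃ n : ℕ, Ioc (-(n : ℝ)) n) = univ := by
    ext x; simp only [mem_iUnion, mem_Ioc, mem_univ, iff_true]
    obtain ⟨n, hn⟩ := exists_nat_gt (|x| + 1)
    exact ⟨n, by linarith [neg_abs_le x], by linarith [le_abs_self x]⟩
  have hμuniv : μ univ ≤ ENNReal.ofReal (M - m) := by
    rw [← hunion, Directed.measure_iUnion]
    · apply iSup_le
      intro n
      rw [hμ, StieltjesFunction.measure_Ioc]
      apply ENNReal.ofReal_le_ofReal
      have h1 := (hF (n : ℝ)).2
      have h2 := (hF (-(n : ℝ))).1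
      linarith
    · apply Monotone.directed_le
      intro a b hab
      apply Ioc_subset_Ioc
      · simp only [neg_le_neg_iff]; exact_mod_cast hab
      · exact_mod_cast hab
  have hfin : IsFiniteMeasure μ :=
    ⟨lt_of_le_of_lt hμuniv ENNReal.ofReal_lt_top⟩
  have hsub : {x : ℝ | DifferentiableAt ℝ g x ∧ c < deriv g x} ≤ᵐ[volume]
      {x : ℝ | ENNReal.ofReal c ≤ μ.rnDeriv volume x} := by
    filter_upwards [hg.ae_hasDerivAt] with x hx hxS
    exact ENNReal.ofReal_le_of_le_toReal (le_of_lt (hx.deriv ▸ hxS.2))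
  have h1 : volume {x : ℝ | DifferentiableAt ℝ g x ∧ c < deriv g x}
      ≤ volume {x : ℝ | ENNReal.ofReal c ≤ μ.rnDeriv volume x} := measure_mono_ae hsub
  have h2 : volume {x : ℝ | ENNReal.ofReal c ≤ μ.rnDeriv volume x}
      ≤ (∫⁻ x, μ.rnDeriv volume x ∂volume) / ENNReal.ofReal c :=
    meas_ge_le_lintegral_div (μ.measurable_rnDeriv volume).aemeasurable
      (by simp [ENNReal.ofReal_eq_zero, not_le, hc]) ENNReal.ofReal_ne_top
  refine lt_of_le_of_lt (le_trans h1 h2) ?_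
  exact ENNReal.div_lt_top (Measure.lintegral_rnDeriv_lt_top μ volume).ne
    (by simp [ENNReal.ofReal_eq_zero, not_le, hc])

/-- Borel's Calculus Lemma: for a monotone increasing nonnegative function `h` and `δ > 0`,
the inequality `deriv h r ≤ h r ^ (1 + δ)` holds for all `r ≥ 0` outside a set of finite
Lebesgue measure (at points where `h` is differentiable). -/
theorem borel_calculus_lemma (h : ℝ → ℝ) (hmono : Monotone h) (hnonneg : ∀ r, 0 ≤ h r)
    (δ : ℝ) (hδ : 0 < δ) :
    volume {r : ℝ | 0 ≤ r ∧ DifferentiableAt ℝ h r ∧ h r ^ (1 + δ) < deriv h r} < ⊤ := by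
  by_cases hpos : ∃ r₀, 0 ≤ r₀ ∧ 0 < h r₀
  · obtain ⟨r₀, hr₀, hc⟩ := hpos
    set c := h r₀ with hcdef
    set g : ℝ → ℝ := fun x => -(max (h x) c ^ (-δ)) with hgdef
    have hmaxpos : ∀ x, 0 < max (h x) c := fun x => lt_max_of_lt_right hc
    have hg : Monotone g := by
      intro x y hxy
      simp only [hgdef, neg_le_neg_iff]
      exact Real.rpow_le_rpow_of_nonpos (hmaxpos x)
        (max_le_max (hmono hxy) le_rfl) (by linarith)
    have hbd : ∀ x, -(c ^ (-δ)) ≤ g x ∧ g x ≤ 0 := by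
      intro x
      refine ⟨?_, ?_⟩
      · simp only [hgdef, neg_le_neg_iff]
        exact Real.rpow_le_rpow_of_nonpos hc (le_max_right _ _) (by linarith)
      · simp only [hgdef, neg_nonpos]
        exact Real.rpow_nonneg (hmaxpos x).le _
    have hsub : {r : ℝ | 0 ≤ r ∧ DifferentiableAt ℝ h r ∧ h r ^ (1 + δ) < deriv h r} ⊆
        Icc 0 r₀ ∪ {x : ℝ | DifferentiableAt ℝ g x ∧ δ < deriv g x} := by
      rintro r ⟨hr0, hdiff, hlt⟩
      by_cases hle : r ≤ r₀
      · exact Or.inl ⟨hr0, hle⟩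
      push_neg at hle
      right
      have hhr : c ≤ h r := hmono hle.le
      have hhrpos : 0 < h r := lt_of_lt_of_le hc hhr
      -- g agrees with -(h · ^ (-δ)) near r
      have hev : g =ᶠ[nhds r] fun y => -(h y ^ (-δ)) := by
        filter_upwards [Ioi_mem_nhds hle] with y hy
        simp only [hgdef]
        rw [max_eq_left (hmono (le_of_lt hy))]
      have hd : HasDerivAt h (deriv h r) r := hdiff.hasDerivAt
      have H : HasDerivAt (fun y => -(h y ^ (-δ)))
          (-(deriv h r * (-δ) * h r ^ (-δ - 1))) r :=
        (hd.rpow_const (Or.inl hhrpos.ne')).neg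
      have Hg : HasDerivAt g (-(deriv h r * (-δ) * h r ^ (-δ - 1))) r :=
        H.congr_of_eventuallyEq hev
      refine ⟨Hg.differentiableAt, ?_⟩
      rw [Hg.deriv]
      have hB : 0 < h r ^ (-δ - 1) := Real.rpow_pos_of_pos hhrpos _
      have hAB : h r ^ (1 + δ) * h r ^ (-δ - 1) = 1 := by
        rw [← Real.rpow_add hhrpos, show (1 + δ) + (-δ - 1) = 0 from by ring, Real.rpow_zero]
      nlinarith [mul_lt_mul_of_pos_right hlt (mul_pos hδ hB)]
    refine lt_of_le_of_lt (le_trans (measure_mono hsub) (measure_union_le _ _)) ?_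
    have h1 : volume (Icc (0:ℝ) r₀) < ⊤ := by
      rw [Real.volume_Icc]; exact ENNReal.ofReal_lt_top
    have h2 := aux_mono_deriv_finite g hg (-(c ^ (-δ))) 0 hbd δ hδ
    exact ENNReal.add_lt_top.2 ⟨h1, h2⟩
  · push_neg at hpos
    have hzero : ∀ x, h x = 0 := by
      intro x
      rcases le_or_gt x 0 with hx | hx
      · exact le_antisymm (le_trans (hmono hx) (hpos 0 le_rfl)) (hnonneg x)
      · exact le_antisymm (hpos x hx.le) (hnonneg x)
    have hh : h = fun _ => 0 := funext hzero
    have : {r : ℝ | 0 ≤ r ∧ DifferentiableAt ℝ h r ∧ h r ^ (1 + δ) < deriv h r} = ∅ := by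
      ext r
      simp only [mem_setOf_eq, mem_empty_iff_false, iff_false, not_and]
      intro _ _
      rw [hh]
      simp only [deriv_const]
      rw [Real.zero_rpow (by positivity)]
      exact lt_irrefl 0
    rw [this]
    simp
end

section
/- Let h : ℝ≥0 → ℝ≥0 be monotone increasing, let δ > 0, and let r₀ ≥ 0 with h(r₀) > 0. Then the Lebesgue measure of the set E = {r > r₀ : h is differentiable at r and h'(r) > h(r)^{1+δ}} is at most 1/(δ · h(r₀)^δ). -/
open MeasureTheory

/-- Quantitative Borel Calculus Lemma: for monotone increasing `h : ℝ → ℝ` with `h ≥ 0`,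
`δ > 0` and `r₀ ≥ 0` with `h r₀ > 0`, the set of `r > r₀` where `h` is differentiable
and `deriv h r > h r ^ (1+δ)` has Lebesgue measure at most `1 / (δ * h r₀ ^ δ)`. -/
theorem borel_calculus_lemma_quantitative (h : ℝ → ℝ) (hmono : Monotone h)
    (hnonneg : ∀ r, 0 ≤ h r) (δ : ℝ) (hδ : 0 < δ) (r₀ : ℝ) (hr₀ : 0 ≤ r₀)
    (hpos : 0 < h r₀) :
    volume {r : ℝ | r₀ < r ∧ DifferentiableAt ℝ h r ∧ h r ^ (1 + δ) < deriv h r}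
      ≤ ENNReal.ofReal (1 / (δ * h r₀ ^ δ)) := by
  set E := {r : ℝ | r₀ < r ∧ DifferentiableAt ℝ h r ∧ h r ^ (1 + δ) < deriv h r} with hEdef
  set g : ℝ → ℝ := fun r => -(1/δ) * (max (h r) (h r₀)) ^ (-δ) with hgdef
  have hmaxpos : ∀ r, 0 < max (h r) (h r₀) := fun r => lt_max_of_lt_right hpos
  have hδ' : (0:ℝ) ≤ 1/δ := by positivity
  have hgmono : Monotone g := by
    intro a b hab
    have h1 : max (h a) (h r₀) ≤ max (h b) (h r₀) := max_le_max (hmono hab) le_rfl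
    have h2 := Real.rpow_le_rpow_of_nonpos (hmaxpos a) h1 (neg_nonpos.mpr hδ.le)
    simp only [hgdef]
    nlinarith
  have hgnonpos : ∀ r, g r ≤ 0 := by
    intro r
    have h2 : (0:ℝ) ≤ (max (h r) (h r₀)) ^ (-δ) := Real.rpow_nonneg (hmaxpos r).le _
    simp only [hgdef]
    nlinarith
  have hgr₀ : g r₀ = -(1 / (δ * h r₀ ^ δ)) := by
    simp only [hgdef, max_self]
    rw [Real.rpow_neg hpos.le]
    have : h r₀ ^ δ ≠ 0 := (Real.rpow_pos_of_pos hpos δ).ne'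
    field_simp
  -- key derivative computation on E
  have hderivE : ∀ x ∈ E, HasDerivAt g (deriv h x * h x ^ (-δ - 1)) x ∧
      (1:ℝ) < deriv h x * h x ^ (-δ - 1) := by
    intro x hx
    obtain ⟨hxr, hxdiff, hxgt⟩ := hx
    have hhx : 0 < h x := lt_of_lt_of_le hpos (hmono hxr.le)
    have heq : g =ᶠ[nhds x] fun r => -(1/δ) * (h r) ^ (-δ) := by
      filter_upwards [isOpen_Ioi.mem_nhds hxr] with r hr
      simp only [hgdef, max_eq_left (hmono (le_of_lt hr))]
    have hd1 : HasDerivAt (fun r => (h r) ^ (-δ)) (deriv h x * (-δ) * h x ^ (-δ - 1)) x :=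
      hxdiff.hasDerivAt.rpow_const (Or.inl hhx.ne')
    have hd2 : HasDerivAt (fun r => -(1/δ) * (h r) ^ (-δ))
        (-(1/δ) * (deriv h x * (-δ) * h x ^ (-δ - 1))) x := hd1.const_mul _
    have hd3 : HasDerivAt g (-(1/δ) * (deriv h x * (-δ) * h x ^ (-δ - 1))) x :=
      hd2.congr_of_eventuallyEq heq
    have hval : -(1/δ) * (deriv h x * (-δ) * h x ^ (-δ - 1))
        = deriv h x * h x ^ (-δ - 1) := by
      field_simp
    rw [hval] at hd3
    refine ⟨hd3, ?_⟩
    have hp1 : 0 < h x ^ (-δ - 1) := Real.rpow_pos_of_pos hhx _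
    have : h x ^ (1 + δ) * h x ^ (-δ - 1) < deriv h x * h x ^ (-δ - 1) := by
      exact mul_lt_mul_of_pos_right hxgt hp1
    calc (1:ℝ) = h x ^ ((1 + δ) + (-δ - 1)) := by
                rw [show (1 + δ) + (-δ - 1) = 0 by ring, Real.rpow_zero]
      _ = h x ^ (1 + δ) * h x ^ (-δ - 1) := Real.rpow_add hhx _ _
      _ < deriv h x * h x ^ (-δ - 1) := this
  -- measurability of E
  have hEmeas : MeasurableSet E := by
    have : E = Set.Ioi r₀ ∩ ({r | DifferentiableAt ℝ h r} ∩
        {r | h r ^ (1 + δ) < deriv h r}) := by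
      ext r; simp [hEdef, Set.mem_Ioi, and_assoc]
    rw [this]
    exact measurableSet_Ioi.inter ((measurableSet_of_differentiableAt (𝕜 := ℝ) (f := h)).inter
      (measurableSet_lt ((Real.continuous_rpow_const (by positivity : (0:ℝ) ≤ 1 + δ)).measurable.comp
        hmono.measurable) (measurable_deriv h)))
  set G := hgmono.stieltjesFunction with hGdef
  set μ := G.measure with hμdef
  -- a.e. lower bound for rnDeriv on E
  have key1 : ∀ᵐ x ∂volume, x ∈ E → (1 : ENNReal) ≤ μ.rnDeriv volume x := by
    filter_upwards [hgmono.ae_hasDerivAt] with x hx hxE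
    obtain ⟨hd, hgt⟩ := hderivE x hxE
    have heq : deriv h x * h x ^ (-δ - 1) = (μ.rnDeriv volume x).toReal := hd.unique hx
    by_cases htop : μ.rnDeriv volume x = ⊤
    · simp [htop]
    · rw [← ENNReal.ofReal_one]
      exact ENNReal.ofReal_le_of_le_toReal (by rw [← heq]; exact hgt.le)
  have step1 : volume E ≤ ∫⁻ x in E, μ.rnDeriv volume x := by
    rw [← setLIntegral_one]
    exact setLIntegral_mono_ae (μ.measurable_rnDeriv volume).aemeasurable
      (key1.mono fun x hx hxE => hx hxE)
  have step2 : ∫⁻ x in E, μ.rnDeriv volume x ≤ μ E :=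
    Measure.setLIntegral_rnDeriv_le E
  have step3 : μ E ≤ μ (Set.Ioi r₀) := measure_mono fun x hx => hx.1
  have step4 : μ (Set.Ioi r₀) ≤ ENNReal.ofReal (1 / (δ * h r₀ ^ δ)) := by
    have hsub : Set.Ioi r₀ ⊆ ⋃ n : ℕ, Set.Ioc r₀ (r₀ + n) := by
      intro x hx
      obtain ⟨n, hn⟩ := exists_nat_ge (x - r₀)
      exact Set.mem_iUnion.2 ⟨n, hx, by linarith⟩
    have hmono' : Monotone (fun n : ℕ => Set.Ioc r₀ (r₀ + n)) := by
      intro m n hmn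
      exact Set.Ioc_subset_Ioc_right (by simp [Nat.cast_le.mpr hmn])
    refine le_trans (measure_mono hsub) ?_
    rw [hmono'.directed_le.measure_iUnion]
    refine iSup_le fun n => ?_
    rw [hμdef, StieltjesFunction.measure_Ioc]
    refine ENNReal.ofReal_le_ofReal ?_
    have hGb : G (r₀ + n) ≤ 0 := by
      have h1 : G (r₀ + n) = Function.rightLim g (r₀ + n) := hgmono.stieltjesFunction_eq _
      have h2 : Function.rightLim g (r₀ + n) ≤ g (r₀ + n + 1) :=
        hgmono.rightLim_le (by linarith)
      exact h1 ▸ h2.trans (hgnonpos _)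
    have hGr₀ : g r₀ ≤ G r₀ := by
      have h1 : G r₀ = Function.rightLim g r₀ := hgmono.stieltjesFunction_eq _
      exact h1 ▸ hgmono.le_rightLim le_rfl
    have := hgr₀ ▸ hGr₀
    linarith
  exact step1.trans (step2.trans (step3.trans step4))
end

section
/- Let γ : ℂ → ℝ≥0 be a nonnegative continuous function, define N(r) = ∫₀^r (1/t)(∫_{Δ(t)} γ dA) dt, assumed finite for all r > 0, and suppose there exists r₀ > 0 with N(r) ≥ 1/r for all r ≥ r₀. Then for every δ > 0 the inequality ∫₀^{2π} γ(r e^{iθ}) dθ/(2π) ≤ ( N(r) )^{(1+δ)²} holds for all r ∈ ℝ≥0 outside a Borel subset E of finite Lebesgue measure. -/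
open MeasureTheory

noncomputable section

namespace CircleAvgAux

open Set Real

/-- circle integral (without the `1/2π`) -/
def Av (γ : ℂ → ℝ) (r : ℝ) : ℝ :=
  ∫ θ in (0:ℝ)..(2 * Real.pi), γ ((r : ℂ) * Complex.exp ((θ : ℂ) * Complex.I))

/-- mass of the disk of radius `t` -/
def Mb (γ : ℂ → ℝ) (t : ℝ) : ℝ := ∫ z in Metric.ball (0:ℂ) t, γ z

variable {γ : ℂ → ℝ}

lemma Av_nonneg (hnn : ∀ z, 0 ≤ γ z) (r : ℝ) : 0 ≤ Av γ r :=
  intervalIntegral.integral_nonneg (by positivity) (fun θ _ => hnn _)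

lemma Mb_nonneg (hnn : ∀ z, 0 ≤ γ z) (t : ℝ) : 0 ≤ Mb γ t :=
  setIntegral_nonneg measurableSet_ball (fun z _ => hnn z)

lemma Mb_zero {t : ℝ} (ht : t ≤ 0) : Mb γ t = 0 := by
  unfold Mb
  rw [Metric.ball_eq_empty.2 ht]
  simp

lemma integrableOn_ball (hc : Continuous γ) (t : ℝ) :
    IntegrableOn γ (Metric.ball (0:ℂ) t) := by
  have h : IntegrableOn γ (Metric.closedBall (0:ℂ) |t|) :=
    hc.continuousOn.integrableOn_compact (isCompact_closedBall (0:ℂ) |t|)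
  exact h.mono_set (Metric.ball_subset_closedBall.trans
    (Metric.closedBall_subset_closedBall (le_abs_self t)))

lemma continuous_Av (hc : Continuous γ) : Continuous (Av γ) := by
  have : Continuous (Function.uncurry fun (r θ : ℝ) =>
      γ ((r : ℂ) * Complex.exp ((θ : ℂ) * Complex.I))) := by
    apply hc.comp
    fun_prop
  exact intervalIntegral.continuous_parametric_intervalIntegral_of_continuous' this 0 (2*Real.pi)

lemma integrableOn_mul_Av (hc : Continuous γ) (a b : ℝ) :
    IntegrableOn (fun u => u * Av γ u) (Ioo a b) :=
  ((continuous_id.mul (continuous_Av hc)).integrableOn_Icc).mono_set Ioo_subset_Icc_self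

lemma polar (hc : Continuous γ) {t : ℝ} (ht : 0 < t) :
    Mb γ t = ∫ u in Ioo (0:ℝ) t, u * Av γ u := by
  classical
  have hπ := Real.pi_pos
  -- continuity of the polar integrand
  have hsymm : ∀ q : ℝ × ℝ, Complex.polarCoord.symm q = (q.1 : ℂ) * Complex.exp ((q.2 : ℂ) * Complex.I) := by
    intro q
    rw [Complex.polarCoord_symm_apply, Complex.exp_mul_I]
    push_cast
    ring_nf
  have hcont : Continuous (fun q : ℝ × ℝ => q.1 * γ (Complex.polarCoord.symm q)) := by
    have : Continuous (fun q : ℝ × ℝ => Complex.polarCoord.symm q) := by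
      simp only [hsymm]
      fun_prop
    exact continuous_fst.mul (hc.comp this)
  have hint : IntegrableOn (fun q : ℝ × ℝ => q.1 * γ (Complex.polarCoord.symm q))
      (Ioo (0:ℝ) t ×ˢ Ioo (-Real.pi) Real.pi) := by
    refine (hcont.continuousOn.integrableOn_compact
      (isCompact_Icc.prod isCompact_Icc : IsCompact (Icc (0:ℝ) t ×ˢ Icc (-Real.pi) Real.pi))).mono_set ?_
    exact Set.prod_mono Ioo_subset_Icc_self Ioo_subset_Icc_self
  have h2 := Complex.integral_comp_polarCoord_symm ((Metric.ball (0:ℂ) t).indicator γ)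
  have h1 : Mb γ t = ∫ p in polarCoord.target,
      p.1 • (Metric.ball (0:ℂ) t).indicator γ (Complex.polarCoord.symm p) := by
    rw [h2, integral_indicator Metric.isOpen_ball.measurableSet]
    rfl
  have htar : polarCoord.target = Ioi (0:ℝ) ×ˢ Ioo (-Real.pi) Real.pi := rfl
  have h3 : EqOn (fun p : ℝ × ℝ => p.1 • (Metric.ball (0:ℂ) t).indicator γ (Complex.polarCoord.symm p))
      ((Ioo (0:ℝ) t ×ˢ Ioo (-Real.pi) Real.pi).indicator
        (fun q : ℝ × ℝ => q.1 * γ (Complex.polarCoord.symm q)))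
      polarCoord.target := by
    intro p hp
    dsimp only
    rw [htar] at hp
    obtain ⟨hp1, hp2⟩ := hp
    have habs : ‖Complex.polarCoord.symm p‖ = p.1 := by
      rw [Complex.norm_polarCoord_symm, abs_of_pos hp1]
    by_cases hmem : Complex.polarCoord.symm p ∈ Metric.ball (0:ℂ) t
    · have hp1t : p.1 < t := by
        rw [Metric.mem_ball, Complex.dist_eq, sub_zero, habs] at hmem
        exact hmem
      rw [indicator_of_mem hmem, indicator_of_mem (by exact ⟨⟨hp1, hp1t⟩, hp2⟩)]
      simp [smul_eq_mul]
    · have hp1t : ¬ (p.1 < t) := by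
        rw [Metric.mem_ball, Complex.dist_eq, sub_zero, habs] at hmem
        exact hmem
      rw [indicator_of_notMem hmem, indicator_of_notMem (by
        intro hmem2
        exact hp1t hmem2.1.2)]
      simp
  rw [h1, setIntegral_congr_fun polarCoord.open_target.measurableSet h3,
    setIntegral_indicator ((measurableSet_Ioo).prod measurableSet_Ioo)]
  have h4 : polarCoord.target ∩ (Ioo (0:ℝ) t ×ˢ Ioo (-Real.pi) Real.pi)
      = Ioo (0:ℝ) t ×ˢ Ioo (-Real.pi) Real.pi := by
    rw [htar]
    exact inter_eq_self_of_subset_right (Set.prod_mono Ioo_subset_Ioi_self Subset.rfl)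
  rw [h4, Measure.volume_eq_prod, setIntegral_prod _ (by rwa [← Measure.volume_eq_prod])]
  apply setIntegral_congr_fun measurableSet_Ioo
  intro u hu
  -- inner integral: ∫ θ in Ioo (-π) π, u * γ (symm (u, θ)) = u * Av γ u
  have : (∫ θ in Ioo (-Real.pi) Real.pi, u * γ (Complex.polarCoord.symm (u, θ)))
      = u * ∫ θ in Ioo (-Real.pi) Real.pi, γ ((u:ℂ) * Complex.exp ((θ:ℂ) * Complex.I)) := by
    rw [← integral_const_mul]
    apply setIntegral_congr_fun measurableSet_Ioo
    intro θ _
    dsimp only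
    rw [hsymm]
  dsimp only
  rw [this]
  congr 1
  -- now: ∫ θ in Ioo (-π) π, f θ = Av γ u
  have hper : Function.Periodic (fun θ : ℝ => γ ((u:ℂ) * Complex.exp ((θ:ℂ) * Complex.I))) (2 * Real.pi) := by
    intro θ
    have : ((θ + 2 * Real.pi : ℝ) : ℂ) * Complex.I = (θ:ℂ) * Complex.I + 2 * Real.pi * Complex.I := by
      push_cast; ring
    simp only [this, Complex.exp_add, Complex.exp_two_pi_mul_I, mul_one]
  have hle : (-Real.pi : ℝ) ≤ Real.pi := by linarith
  rw [← integral_Ioc_eq_integral_Ioo, ← intervalIntegral.integral_of_le hle]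
  have := hper.intervalIntegral_add_eq (-Real.pi) 0
  simp only [zero_add] at this
  have hx : -Real.pi + 2 * Real.pi = Real.pi := by ring
  rw [hx] at this
  rw [this]
  rfl

end CircleAvgAux

section MainProof

open Set Real CircleAvgAux

set_option maxHeartbeats 1000000

/-- Calculus-lemma estimate for the circle average: with
`N r = ∫₀^r (1/t)(∫_{Δ(t)} γ dA) dt` and `N r ≥ 1/r` for large `r`, for every `δ > 0`
the inequality `∫₀^{2π} γ(r e^{iθ}) dθ/(2π) ≤ N(r)^{(1+δ)²}` holds outside a set of
finite Lebesgue measure. -/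
theorem circle_average_le_counting_pow (γ : ℂ → ℝ) (hc : Continuous γ)
    (hnn : ∀ z, 0 ≤ γ z) (N : ℝ → ℝ)
    (hN : ∀ r : ℝ, N r =
      ∫ t in (0 : ℝ)..r, (1 / t) * ∫ z in Metric.ball (0 : ℂ) t, γ z ∂volume)
    (hfin : ∀ r : ℝ, 0 < r →
      IntervalIntegrable (fun t => (1 / t) * ∫ z in Metric.ball (0 : ℂ) t, γ z ∂volume)
        volume 0 r)
    (hgrow : ∃ r₀ : ℝ, 0 < r₀ ∧ ∀ r : ℝ, r₀ ≤ r → 1 / r ≤ N r)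
    (δ : ℝ) (hδ : 0 < δ) :
    volume {r : ℝ | 0 ≤ r ∧
      N r ^ ((1 + δ) ^ 2) <
        (1 / (2 * Real.pi)) *
          ∫ θ in (0 : ℝ)..(2 * Real.pi), γ ((r : ℂ) * Complex.exp (θ * Complex.I))} < ⊤ := by
  classical
  have hπ := Real.pi_pos
  have hπ1 := Real.pi_gt_three
  set p : ℝ := (1 + δ) ^ 2 with hpdef
  have hp1 : 1 < p := by nlinarith
  have hppos : 0 < p := by linarith
  set g : ℝ → ℝ := fun t => (1 / t) * Mb γ t with hgdef
  have hNg : ∀ r : ℝ, N r = ∫ t in (0:ℝ)..r, g t := hN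
  have hfing : ∀ r : ℝ, 0 < r → IntervalIntegrable g volume 0 r := hfin
  suffices hvol : volume {r : ℝ | 0 ≤ r ∧ N r ^ p < (1 / (2 * Real.pi)) * Av γ r} < ⊤ by
    exact hvol
  set E : Set ℝ := {r : ℝ | 0 ≤ r ∧ N r ^ p < (1 / (2 * Real.pi)) * Av γ r} with hEdef
  -- basic facts about g and N
  have hgzero : ∀ t : ℝ, t ≤ 0 → g t = 0 := by
    intro t ht
    rw [hgdef]
    dsimp only
    rw [Mb_zero ht, mul_zero]
  have hgnonneg : ∀ t : ℝ, 0 ≤ g t := by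
    intro t
    rcases le_or_gt t 0 with h | h
    · rw [hgzero t h]
    · exact mul_nonneg (by positivity) (Mb_nonneg hnn t)
  have hgint : ∀ a b : ℝ, IntervalIntegrable g volume a b := by
    have h0 : ∀ b : ℝ, IntervalIntegrable g volume 0 b := by
      intro b
      rcases lt_or_ge 0 b with h | h
      · exact hfing b h
      · constructor
        · rw [Set.Ioc_eq_empty (not_lt.2 h)]
          exact integrableOn_empty
        · exact (integrableOn_zero).congr_fun (fun x hx => (hgzero x hx.2).symm) measurableSet_Ioc
    intro a b
    exact (h0 a).symm.trans (h0 b)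
  have hNdiff : ∀ a b : ℝ, N b - N a = ∫ t in a..b, g t := by
    intro a b
    rw [hNg a, hNg b]
    exact intervalIntegral.integral_interval_sub_left (hgint 0 b) (hgint 0 a)
  have hNmono : ∀ a b : ℝ, a ≤ b → N a ≤ N b := by
    intro a b hab
    have h := hNdiff a b
    have h2 : 0 ≤ ∫ t in a..b, g t :=
      intervalIntegral.integral_nonneg hab (fun u _ => hgnonneg u)
    linarith
  have hN0 : N 0 = 0 := by rw [hNg 0, intervalIntegral.integral_same]
  have hNnonneg : ∀ r : ℝ, 0 ≤ r → 0 ≤ N r := fun r hr => hN0 ▸ hNmono 0 r hr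
  -- trivial case
  by_cases htriv : ∀ z, γ z = 0
  · have hE0 : E = ∅ := by
      ext r
      simp only [hEdef, mem_setOf_eq, mem_empty_iff_false, iff_false, not_and]
      intro _
      have hAv : Av γ r = 0 := by
        unfold Av
        simp only [htriv]
        simp
      have hMb : ∀ t : ℝ, Mb γ t = 0 := by
        intro t
        unfold Mb
        simp only [htriv]
        simp
      have hNr : N r = 0 := by
        rw [hNg r]
        have hg0 : ∀ t : ℝ, g t = 0 := by
          intro t
          rw [hgdef]
          dsimp only
          rw [hMb t, mul_zero]
        simp only [hg0]
        simp
      rw [hNr, hAv, Real.zero_rpow (ne_of_gt hppos), mul_zero]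
      simp
    rw [hE0]
    simp
  push_neg at htriv
  obtain ⟨z₀, hz₀⟩ := htriv
  have hz₀pos : 0 < γ z₀ := lt_of_le_of_ne (hnn z₀) (Ne.symm hz₀)
  -- positive mass at some radius
  set t₀ : ℝ := ‖z₀‖ + 1 with ht₀def
  have ht₀pos : 0 < t₀ := by positivity
  have hMbt₀ : 0 < Mb γ t₀ := by
    unfold Mb
    rw [setIntegral_pos_iff_support_of_nonneg_ae
      (Filter.Eventually.of_forall (fun z => hnn z)) (integrableOn_ball hc t₀)]
    apply IsOpen.measure_pos
    · exact hc.isOpen_support.inter Metric.isOpen_ball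
    · refine ⟨z₀, hz₀, ?_⟩
      rw [Metric.mem_ball, Complex.dist_eq, sub_zero, ht₀def]
      exact lt_add_one _
  -- Mb monotone
  have hMbmono : ∀ a b : ℝ, a ≤ b → Mb γ a ≤ Mb γ b := by
    intro a b hab
    exact setIntegral_mono_set (integrableOn_ball hc b)
      (Filter.Eventually.of_forall (fun z => hnn z))
      (HasSubset.Subset.eventuallyLE (Metric.ball_subset_ball hab))
  -- N grows to infinity
  have hNinf : ∀ c : ℝ, ∃ X : ℝ, 1 ≤ X ∧ c ≤ N X := by
    intro c
    set c' : ℝ := max c 0 with hc'def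
    have hc'0 : 0 ≤ c' := le_max_right _ _
    set s : ℝ := t₀ * Real.exp (c' / Mb γ t₀) with hsdef
    have hst₀ : t₀ ≤ s := by
      rw [hsdef]
      nth_rewrite 1 [← mul_one t₀]
      exact mul_le_mul_of_nonneg_left (Real.one_le_exp (by positivity)) ht₀pos.le
    have hspos : 0 < s := lt_of_lt_of_le ht₀pos hst₀
    have hlow : ∀ u ∈ Icc t₀ s, Mb γ t₀ * (1/u) ≤ g u := by
      intro u hu
      have hu0 : 0 < u := lt_of_lt_of_le ht₀pos hu.1
      rw [hgdef]
      dsimp only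
      have h4 : (0:ℝ) ≤ 1/u := by positivity
      calc Mb γ t₀ * (1/u) ≤ Mb γ u * (1/u) :=
            mul_le_mul_of_nonneg_right (hMbmono t₀ u hu.1) h4
        _ = 1/u * Mb γ u := mul_comm _ _
    have hnot : (0:ℝ) ∉ Set.uIcc t₀ s := by
      rw [Set.uIcc_of_le hst₀]
      intro hmem
      exact absurd hmem.1 (not_le.2 ht₀pos)
    have hint1 : IntervalIntegrable (fun u : ℝ => Mb γ t₀ * (1/u)) volume t₀ s :=
      (intervalIntegral.intervalIntegrable_one_div (f := fun u : ℝ => u)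
        (fun u hu h0 => hnot (h0 ▸ hu)) continuousOn_id).const_mul _
    have hcalc : ∫ u in t₀..s, Mb γ t₀ * (1/u) = Mb γ t₀ * Real.log (s/t₀) := by
      rw [intervalIntegral.integral_const_mul, integral_one_div hnot]
    have hlog : Real.log (s/t₀) = c' / Mb γ t₀ := by
      rw [hsdef, mul_div_cancel_left₀ _ (ne_of_gt ht₀pos)]
      exact Real.log_exp _
    have hfinal : c' ≤ N s := by
      have h1 : N s - N t₀ = ∫ u in t₀..s, g u := hNdiff t₀ s
      have h2 : ∫ u in t₀..s, Mb γ t₀ * (1/u) ≤ ∫ u in t₀..s, g u :=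
        intervalIntegral.integral_mono_on hst₀ hint1 (hgint t₀ s) hlow
      have h3 : 0 ≤ N t₀ := hNnonneg t₀ ht₀pos.le
      rw [hcalc, hlog] at h2
      have h4 : Mb γ t₀ * (c' / Mb γ t₀) = c' := by field_simp
      rw [h4] at h2
      linarith
    exact ⟨max s 1, le_max_right _ _,
      le_trans (le_max_left c 0) (hfinal.trans (hNmono s (max s 1) (le_max_left _ _)))⟩
  obtain ⟨r₁, hr₁1, hr₁N⟩ := hNinf 1
  have hr₁0 : (0:ℝ) < r₁ := by linarith
  have hNge1 : ∀ u : ℝ, r₁ ≤ u → 1 ≤ N u := fun u hu => hr₁N.trans (hNmono _ _ hu)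
  -- on E the circle average dominates
  have hAvE : ∀ u : ℝ, u ∈ E → 2 * Real.pi * N u ^ p < Av γ u := by
    intro u hu
    have h := hu.2
    have h2 := mul_lt_mul_of_pos_left h (by positivity : (0:ℝ) < 2 * Real.pi)
    have h3 : (2 * Real.pi) * ((1 / (2 * Real.pi)) * Av γ u) = Av γ u := by
      field_simp
    rwa [h3] at h2
  -- measurability
  have hNcont : Continuous N := by
    have h : N = fun r => ∫ t in (0:ℝ)..r, g t := funext hNg
    rw [h]
    exact intervalIntegral.continuous_primitive hgint 0
  have hAvcont := continuous_Av hc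
  have hEmeas : MeasurableSet E := by
    have : E = {r : ℝ | 0 ≤ r} ∩ {r : ℝ | N r ^ p < (1 / (2 * Real.pi)) * Av γ r} := by
      ext r; simp [hEdef, mem_setOf_eq]
    rw [this]
    apply MeasurableSet.inter
    · exact measurableSet_Ici
    · exact measurableSet_lt ((Real.continuous_rpow_const hppos.le).comp hNcont).measurable
        (measurable_const.mul hAvcont.measurable)
  -- dyadic levels
  set S : ℕ → Set ℝ := fun m =>
    {u : ℝ | u ∈ E ∧ r₁ < u ∧ (2:ℝ)^m ≤ N u ∧ N u < 2^(m+1)} with hSdef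
  have hSmeas : ∀ m : ℕ, MeasurableSet (S m) := by
    intro m
    have : S m = E ∩ Ioi r₁ ∩ N ⁻¹' Ici ((2:ℝ)^m) ∩ N ⁻¹' Iio ((2:ℝ)^(m+1)) := by
      ext u
      simp only [hSdef, mem_setOf_eq, mem_inter_iff, mem_Ioi, mem_preimage, mem_Ici, mem_Iio]
      tauto
    rw [this]
    exact ((hEmeas.inter measurableSet_Ioi).inter
      (hNcont.measurable measurableSet_Ici)).inter (hNcont.measurable measurableSet_Iio)
  set κ : ℕ → ℝ := fun m => ((2:ℝ)^m) ^ p with hκdef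
  have hκpos : ∀ m : ℕ, 0 < κ m := fun m => Real.rpow_pos_of_pos (by positivity) p
  have hκle : ∀ m : ℕ, ∀ u ∈ S m, κ m ≤ N u ^ p := fun m u hu =>
    Real.rpow_le_rpow (by positivity) hu.2.2.1 hppos.le
  -- circle average lower bound on S m
  have hAvS : ∀ (m : ℕ) (u : ℝ), u ∈ S m → 2 * Real.pi * κ m ≤ Av γ u := by
    intro m u hu
    have h1 := hκle m u hu
    have h2 := hAvE u hu.1
    nlinarith [hκpos m]
  -- generic lower bound for the ball mass in terms of a subset of big circle average
  have hMbU : ∀ (U : Set ℝ) (c t : ℝ), 0 < t → MeasurableSet U → U ⊆ Ioo 0 t →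
      (∀ u ∈ U, c ≤ u * Av γ u) → c * (volume U).toReal ≤ Mb γ t := by
    intro U c t ht hUmeas hUsub hUc
    have hUvol : volume U ≠ ⊤ := ((measure_mono hUsub).trans_lt measure_Ioo_lt_top).ne
    calc c * (volume U).toReal ≤ ∫ u in U, u * Av γ u :=
          setIntegral_ge_of_const_le_real hUmeas hUvol hUc
            ((integrableOn_mul_Av hc 0 t).mono_set hUsub)
      _ ≤ ∫ u in Ioo (0:ℝ) t, u * Av γ u := by
          apply setIntegral_mono_set (integrableOn_mul_Av hc 0 t) ?_
            (HasSubset.Subset.eventuallyLE hUsub)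
          filter_upwards [ae_restrict_mem measurableSet_Ioo] with u hu
          exact mul_nonneg hu.1.le (Av_nonneg hnn u)
      _ = Mb γ t := (polar hc ht).symm
  -- lower bound for N x through a constant lower bound on the mass
  have hNX : ∀ (a C x : ℝ), 0 < a → a ≤ x → (∀ t : ℝ, a ≤ t → t ≤ x → C ≤ Mb γ t) →
      C * (x - a) / x ≤ N x := by
    intro a C x ha hax hC
    have hx0 : 0 < x := lt_of_lt_of_le ha hax
    have h1 : N x - N a = ∫ t in a..x, g t := hNdiff a x
    have h2 : ∀ t ∈ Icc a x, C / x ≤ g t := by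
      intro t ht
      have ht0 : 0 < t := lt_of_lt_of_le ha ht.1
      have h3 : C ≤ Mb γ t := hC t ht.1 ht.2
      have h4 : (1:ℝ)/x ≤ 1/t := one_div_le_one_div_of_le ht0 ht.2
      have h5 : (0:ℝ) ≤ Mb γ t := Mb_nonneg hnn t
      rw [hgdef]
      dsimp only
      calc C / x = C * (1/x) := by ring
        _ ≤ Mb γ t * (1/t) := by
            apply mul_le_mul h3 h4 (by positivity) h5
        _ = 1/t * Mb γ t := mul_comm _ _
    have h5 : ∫ t in a..x, (C / x) ≤ ∫ t in a..x, g t :=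
      intervalIntegral.integral_mono_on hax (intervalIntegrable_const) (hgint a x) h2
    rw [intervalIntegral.integral_const, smul_eq_mul] at h5
    have h6 : 0 ≤ N a := hNnonneg a ha.le
    have h7 : C * (x - a) / x = (x - a) * (C / x) := by field_simp
    linarith
  -- the key estimate
  have key : ∀ (m : ℕ) (x : ℝ), x ∈ S m →
      volume (S m ∩ Ioo r₁ x) ≤
        ENNReal.ofReal ((2:ℝ)^(m+1) / (Real.pi * κ m)) +
        ENNReal.ofReal (Real.sqrt ((2:ℝ)^(m+3) / (Real.pi * κ m))) := by
    intro m x hx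
    obtain ⟨hxE, hxr₁, hxlow, hxhigh⟩ := hx
    have hx1 : (1:ℝ) ≤ x := le_trans hr₁1 hxr₁.le
    have hx0 : (0:ℝ) < x := by linarith
    set T₁ : Set ℝ := S m ∩ Ioo r₁ (x/2) with hT₁def
    set T₂ : Set ℝ := S m ∩ Ico (x/2) x with hT₂def
    have hT₁meas : MeasurableSet T₁ := (hSmeas m).inter measurableSet_Ioo
    have hT₂meas : MeasurableSet T₂ := (hSmeas m).inter measurableSet_Ico
    have hT₁fin : volume T₁ ≠ ⊤ :=
      ((measure_mono inter_subset_right).trans_lt measure_Ioo_lt_top).ne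
    have hT₂fin : volume T₂ ≠ ⊤ :=
      ((measure_mono inter_subset_right).trans_lt measure_Ico_lt_top).ne
    set lam1 : ℝ := (volume T₁).toReal with hlam1def
    set lam2 : ℝ := (volume T₂).toReal with hlam2def
    have hlam1nn : 0 ≤ lam1 := ENNReal.toReal_nonneg
    have hlam2nn : 0 ≤ lam2 := ENNReal.toReal_nonneg
    -- claim 1
    have hlam1' : lam1 ≤ 2^(m+1) / (Real.pi * κ m) := by
      have hMb1 : ∀ t : ℝ, x/2 ≤ t → t ≤ x → 2 * Real.pi * κ m * lam1 ≤ Mb γ t := by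
        intro t ht1 ht2
        have ht0 : 0 < t := by linarith
        apply hMbU T₁ _ t ht0 hT₁meas
        · intro u hu
          exact ⟨lt_trans hr₁0 hu.2.1, by linarith [hu.2.2]⟩
        · intro u hu
          have h1 : 1 ≤ u := le_trans hr₁1 hu.2.1.le
          calc 2 * Real.pi * κ m ≤ Av γ u := hAvS m u hu.1
            _ = 1 * Av γ u := (one_mul _).symm
            _ ≤ u * Av γ u := mul_le_mul_of_nonneg_right h1 (Av_nonneg hnn u)
      have h9 := hNX (x/2) (2 * Real.pi * κ m * lam1) x (by linarith) (by linarith) hMb1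
      have harith : 2 * Real.pi * κ m * lam1 * (x - x/2) / x = Real.pi * κ m * lam1 := by
        field_simp
        ring
      rw [harith] at h9
      rw [le_div_iff₀ (by positivity)]
      nlinarith
    -- claim 2
    have hlam2x : lam2 ≤ x/2 := by
      have h1 : volume T₂ ≤ volume (Ico (x/2) x) := measure_mono inter_subset_right
      rw [Real.volume_Ico] at h1
      calc lam2 ≤ (ENNReal.ofReal (x - x/2)).toReal := ENNReal.toReal_mono ENNReal.ofReal_ne_top h1
        _ ≤ x/2 := by
            rw [ENNReal.toReal_ofReal (by linarith)]
            linarith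
    have hlam2' : lam2 ≤ Real.sqrt (2^(m+3) / (Real.pi * κ m)) := by
      have hMb2 : ∀ t : ℝ, x - lam2/2 ≤ t → t ≤ x →
          Real.pi * x * κ m * (lam2/2) ≤ Mb γ t := by
        intro t ht1 ht2
        have ht0 : 0 < t := by linarith
        set U : Set ℝ := T₂ ∩ Iio t with hUdef
        have hUmeas : MeasurableSet U := hT₂meas.inter measurableSet_Iio
        have hUsub : U ⊆ Ioo 0 t := by
          intro u hu
          refine ⟨?_, hu.2⟩
          have := hu.1.2.1
          linarith
        have hUfin : volume U ≠ ⊤ := ((measure_mono hUsub).trans_lt measure_Ioo_lt_top).ne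
        have hUvol : lam2/2 ≤ (volume U).toReal := by
          have hsplit : volume T₂ ≤ volume U + volume (T₂ \ Iio t) := by
            rw [hUdef]
            exact (measure_inter_add_diff T₂ measurableSet_Iio).symm.le
          have hdiff : volume (T₂ \ Iio t) ≤ ENNReal.ofReal (x - t) := by
            have hsub2 : T₂ \ Iio t ⊆ Ico t x := fun u hu => ⟨not_lt.1 hu.2, hu.1.2.2⟩
            calc volume (T₂ \ Iio t) ≤ volume (Ico t x) := measure_mono hsub2
              _ = ENNReal.ofReal (x - t) := Real.volume_Ico
          have h7 : volume T₂ ≤ volume U + ENNReal.ofReal (x - t) :=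
            le_trans hsplit (add_le_add_right hdiff _)
          have h8 := ENNReal.toReal_mono
            (by exact ENNReal.add_ne_top.2 ⟨hUfin, ENNReal.ofReal_ne_top⟩) h7
          rw [ENNReal.toReal_add hUfin ENNReal.ofReal_ne_top,
            ENNReal.toReal_ofReal (by linarith)] at h8
          have : lam2 ≤ (volume U).toReal + (x - t) := h8
          linarith
        have h10 : Real.pi * x * κ m * (lam2/2) ≤ Real.pi * x * κ m * (volume U).toReal := by
          apply mul_le_mul_of_nonneg_left hUvol (by positivity)
        refine le_trans h10 (hMbU U _ t ht0 hUmeas hUsub ?_)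
        intro u hu
        have hu2 : x/2 ≤ u := hu.1.2.1
        have h2 := hAvS m u hu.1.1
        calc Real.pi * x * κ m = (x/2) * (2 * Real.pi * κ m) := by ring
          _ ≤ u * Av γ u := by
              apply mul_le_mul hu2 h2 (by positivity) (by linarith)
      have h9 := hNX (x - lam2/2) (Real.pi * x * κ m * (lam2/2)) x
        (by linarith) (by linarith) hMb2
      have harith : Real.pi * x * κ m * (lam2/2) * (x - (x - lam2/2)) / x
          = Real.pi * κ m * (lam2^2/4) := by
        field_simp
        ring
      rw [harith] at h9
      have h8 : lam2^2 ≤ 2^(m+3) / (Real.pi * κ m) := by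
        rw [le_div_iff₀ (by positivity)]
        have hpow : (2:ℝ)^(m+3) = 4 * 2^(m+1) := by ring
        nlinarith [hκpos m]
      calc lam2 = Real.sqrt (lam2^2) := (Real.sqrt_sq hlam2nn).symm
        _ ≤ _ := Real.sqrt_le_sqrt h8
    -- combine
    have hcov : S m ∩ Ioo r₁ x ⊆ T₁ ∪ T₂ := by
      intro u hu
      rcases lt_or_ge u (x/2) with h | h
      · exact Or.inl ⟨hu.1, hu.2.1, h⟩
      · exact Or.inr ⟨hu.1, h, hu.2.2⟩
    calc volume (S m ∩ Ioo r₁ x) ≤ volume T₁ + volume T₂ :=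
          le_trans (measure_mono hcov) (measure_union_le _ _)
      _ ≤ _ := by
          apply add_le_add
          · exact (ENNReal.le_ofReal_iff_toReal_le hT₁fin (by positivity)).2 hlam1'
          · exact (ENNReal.le_ofReal_iff_toReal_le hT₂fin (Real.sqrt_nonneg _)).2 hlam2'
  -- per-level volume bound
  have hSvol : ∀ m : ℕ, volume (S m) ≤
      ENNReal.ofReal ((2:ℝ)^(m+1) / (Real.pi * κ m)) +
      ENNReal.ofReal (Real.sqrt ((2:ℝ)^(m+3) / (Real.pi * κ m))) := by
    intro m
    rcases Set.eq_empty_or_nonempty (S m) with h | h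
    · rw [h]
      simp
    have hbdd : BddAbove (S m) := by
      obtain ⟨X, _, hXN⟩ := hNinf ((2:ℝ)^(m+1))
      refine ⟨X, fun u hu => ?_⟩
      by_contra hcon
      push_neg at hcon
      exact absurd (lt_of_le_of_lt (hXN.trans (hNmono X u hcon.le)) hu.2.2.2) (lt_irrefl _)
    obtain ⟨seq, hseqmono, hseqtend, hseqmem⟩ := exists_seq_tendsto_sSup h hbdd
    have hcov2 : S m ⊆ (⋃ n : ℕ, S m ∩ Ioo r₁ (seq n)) ∪ {sSup (S m)} := by
      intro u hu
      rcases eq_or_lt_of_le (le_csSup hbdd hu) with h2 | h2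
      · exact Or.inr (by simp [h2])
      · obtain ⟨n, hn⟩ := (hseqtend.eventually (eventually_gt_nhds h2)).exists
        exact Or.inl (mem_iUnion.2 ⟨n, hu, hu.2.1, hn⟩)
    calc volume (S m)
        ≤ volume (⋃ n : ℕ, S m ∩ Ioo r₁ (seq n)) + volume ({sSup (S m)} : Set ℝ) :=
          le_trans (measure_mono hcov2) (measure_union_le _ _)
      _ = volume (⋃ n : ℕ, S m ∩ Ioo r₁ (seq n)) := by
          rw [Real.volume_singleton, add_zero]
      _ ≤ _ := by
          have hdir : Directed (· ⊆ ·) (fun n : ℕ => S m ∩ Ioo r₁ (seq n)) := by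
            apply Monotone.directed_le
            intro i j hij
            exact inter_subset_inter_right _ (Ioo_subset_Ioo le_rfl (hseqmono hij))
          rw [hdir.measure_iUnion]
          exact iSup_le fun n => key m (seq n) (hseqmem n)
  -- the covering of E
  have hdyadic : ∀ y : ℝ, 1 ≤ y → ∃ m : ℕ, (2:ℝ)^m ≤ y ∧ y < 2^(m+1) := by
    intro y hy
    have hfl : 1 ≤ ⌊y⌋₊ := Nat.le_floor (by exact_mod_cast hy)
    refine ⟨Nat.log 2 ⌊y⌋₊, ?_, ?_⟩
    · calc ((2:ℝ))^(Nat.log 2 ⌊y⌋₊) = ((2^(Nat.log 2 ⌊y⌋₊) : ℕ) : ℝ) := by push_cast; ring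
        _ ≤ (⌊y⌋₊ : ℝ) := by exact_mod_cast Nat.pow_log_le_self 2 (by omega)
        _ ≤ y := Nat.floor_le (by linarith)
    · calc y < (⌊y⌋₊ : ℝ) + 1 := Nat.lt_floor_add_one y
        _ ≤ ((2:ℝ))^(Nat.log 2 ⌊y⌋₊ + 1) := by
            have h1 : ⌊y⌋₊ + 1 ≤ 2^(Nat.log 2 ⌊y⌋₊ + 1) :=
              Nat.lt_pow_succ_log_self (by norm_num) ⌊y⌋₊
            calc (⌊y⌋₊ : ℝ) + 1 = ((⌊y⌋₊ + 1 : ℕ) : ℝ) := by push_cast; ring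
              _ ≤ ((2^(Nat.log 2 ⌊y⌋₊ + 1) : ℕ) : ℝ) := by exact_mod_cast h1
              _ = ((2:ℝ))^(Nat.log 2 ⌊y⌋₊ + 1) := by push_cast; ring
  have hEcov : E ⊆ Icc 0 r₁ ∪ ⋃ m : ℕ, S m := by
    intro r hr
    rcases le_or_gt r r₁ with h | h
    · exact Or.inl ⟨hr.1, h⟩
    · obtain ⟨m, h1, h2⟩ := hdyadic (N r) (hNge1 r h.le)
      exact Or.inr (mem_iUnion.2 ⟨m, hr, h, h1, h2⟩)
  -- geometric bounds
  set q₁ : ℝ := (2:ℝ) ^ ((1:ℝ) - p) with hq₁def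
  set q₂ : ℝ := (2:ℝ) ^ (((1:ℝ) - p)/2) with hq₂def
  have hq₁pos : 0 < q₁ := Real.rpow_pos_of_pos two_pos _
  have hq₂pos : 0 < q₂ := Real.rpow_pos_of_pos two_pos _
  have hq₁lt : q₁ < 1 := Real.rpow_lt_one_of_one_lt_of_neg one_lt_two (by linarith)
  have hq₂lt : q₂ < 1 := Real.rpow_lt_one_of_one_lt_of_neg one_lt_two (by linarith)
  have hq₂sq : q₂ * q₂ = q₁ := by
    rw [hq₂def, hq₁def, ← Real.rpow_add two_pos]
    ring_nf
  have hqm : ∀ m : ℕ, ((2:ℝ)^m) / κ m = q₁ ^ m := by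
    intro m
    rw [hκdef, hq₁def]
    dsimp only
    rw [← Real.rpow_natCast (2:ℝ) m, ← Real.rpow_mul (by norm_num : (0:ℝ) ≤ 2),
      ← Real.rpow_natCast ((2:ℝ) ^ ((1:ℝ) - p)) m, ← Real.rpow_mul (by norm_num : (0:ℝ) ≤ 2),
      ← Real.rpow_sub two_pos]
    congr 1
    ring
  have hbound1 : ∀ m : ℕ, (2:ℝ)^(m+1) / (Real.pi * κ m) ≤ 2 * q₁ ^ m := by
    intro m
    calc (2:ℝ)^(m+1) / (Real.pi * κ m) ≤ (2:ℝ)^(m+1) / κ m := by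
          have hk := hκpos m
          gcongr
          nlinarith
      _ = 2 * ((2:ℝ)^m / κ m) := by rw [pow_succ]; ring
      _ = 2 * q₁ ^ m := by rw [hqm m]
  have hbound2 : ∀ m : ℕ, Real.sqrt ((2:ℝ)^(m+3) / (Real.pi * κ m)) ≤ 3 * q₂ ^ m := by
    intro m
    have h1 : (2:ℝ)^(m+3) / (Real.pi * κ m) ≤ (3 * q₂ ^ m)^2 := by
      have h2 : (3 * q₂ ^ m)^2 = 9 * q₁ ^ m := by
        calc (3 * q₂^m)^2 = 9 * (q₂*q₂)^m := by ring
          _ = 9 * q₁^m := by rw [hq₂sq]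
      rw [h2]
      calc (2:ℝ)^(m+3)/(Real.pi * κ m) ≤ (2:ℝ)^(m+3)/κ m := by
            have hk := hκpos m
            gcongr
            nlinarith
        _ = 8 * ((2:ℝ)^m / κ m) := by rw [pow_add]; ring
        _ = 8 * q₁^m := by rw [hqm m]
        _ ≤ 9 * q₁^m := by nlinarith [pow_pos hq₁pos m]
    calc Real.sqrt ((2:ℝ)^(m+3) / (Real.pi * κ m))
        ≤ Real.sqrt ((3*q₂^m)^2) := Real.sqrt_le_sqrt h1
      _ = 3 * q₂ ^ m := Real.sqrt_sq (by positivity)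
  -- sum up
  have hgeosum : ∑' m : ℕ, volume (S m) ≤
      ENNReal.ofReal 2 * (1 - ENNReal.ofReal q₁)⁻¹ +
      ENNReal.ofReal 3 * (1 - ENNReal.ofReal q₂)⁻¹ := by
    calc ∑' m : ℕ, volume (S m)
        ≤ ∑' m : ℕ, (ENNReal.ofReal 2 * (ENNReal.ofReal q₁)^m +
            ENNReal.ofReal 3 * (ENNReal.ofReal q₂)^m) := by
          apply ENNReal.tsum_le_tsum
          intro m
          refine le_trans (hSvol m) (add_le_add ?_ ?_)
          · calc ENNReal.ofReal ((2:ℝ)^(m+1) / (Real.pi * κ m))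
                ≤ ENNReal.ofReal (2 * q₁^m) := ENNReal.ofReal_le_ofReal (hbound1 m)
              _ = ENNReal.ofReal 2 * (ENNReal.ofReal q₁)^m := by
                  rw [ENNReal.ofReal_mul (by norm_num), ENNReal.ofReal_pow hq₁pos.le]
          · calc ENNReal.ofReal (Real.sqrt ((2:ℝ)^(m+3) / (Real.pi * κ m)))
                ≤ ENNReal.ofReal (3 * q₂^m) := ENNReal.ofReal_le_ofReal (hbound2 m)
              _ = ENNReal.ofReal 3 * (ENNReal.ofReal q₂)^m := by
                  rw [ENNReal.ofReal_mul (by norm_num), ENNReal.ofReal_pow hq₂pos.le]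
      _ = _ := by
          rw [ENNReal.tsum_add, ENNReal.tsum_mul_left, ENNReal.tsum_mul_left,
            ENNReal.tsum_geometric, ENNReal.tsum_geometric]
  have hfin1 : (1 - ENNReal.ofReal q₁)⁻¹ < ⊤ := by
    rw [ENNReal.inv_lt_top]
    exact tsub_pos_iff_lt.2 (ENNReal.ofReal_lt_one.2 hq₁lt)
  have hfin2 : (1 - ENNReal.ofReal q₂)⁻¹ < ⊤ := by
    rw [ENNReal.inv_lt_top]
    exact tsub_pos_iff_lt.2 (ENNReal.ofReal_lt_one.2 hq₂lt)
  calc volume E ≤ volume (Icc (0:ℝ) r₁) + volume (⋃ m : ℕ, S m) :=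
        le_trans (measure_mono hEcov) (measure_union_le _ _)
    _ ≤ volume (Icc (0:ℝ) r₁) + ∑' m : ℕ, volume (S m) :=
        add_le_add_right (measure_iUnion_le _) _
    _ < ⊤ := by
        rw [Real.volume_Icc]
        apply ENNReal.add_lt_top.2
        refine ⟨ENNReal.ofReal_lt_top, ?_⟩
        apply lt_of_le_of_lt hgeosum
        apply ENNReal.add_lt_top.2
        constructor
        · exact ENNReal.mul_lt_top ENNReal.ofReal_lt_top hfin1
        · exact ENNReal.mul_lt_top ENNReal.ofReal_lt_top hfin2

end MainProof

end
end
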